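/- Let a, b, c, d be the curvatures of four circles forming a K-cluster with discriminant Δ, i.e., the first row of a matrix W with Wᵀ G_M W = R₀ where the first coordinate function gives curvatures. Then 2(a² + b² + c² + d²) - (a+b+c+d)² - (Δ+4)a² = 0. Equivalently, this quadratic relation on curvatures follows from the identity W R₀⁻¹ Wᵀ = G_M⁻¹ by examining the appropriate entry. -/
import Mathlib


open Matrix

noncomputable def GM : Matrix (Fin 4) (Fin 4) ℝ :=
  !![0, -1/2, 0, 0; -1/2, 0, 0, 0; 0, 0, 1, 0; 0, 0, 0, 1]

set_option maxHeartbeats 2000000 in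
/-- The "Descartes equation" for `K`-clusters: if `Wᵀ G_M W = R₀` and `a,b,c,d` are
the curvatures (second coordinates of the columns of `W`), then
`2(a²+b²+c²+d²) = (a+b+c+d)² + (Δ+4)a²`. -/
theorem stmt_14 (Δ : ℝ) (hΔ : Δ < 0) (W : Matrix (Fin 4) (Fin 4) ℝ)
    (hW : Wᵀ * GM * W =
      !![1, -1, -1, -1;
         -1, 1, 1 + Δ/2, 1 + Δ/2;
         -1, 1 + Δ/2, 1, 1 + Δ/2;
         -1, 1 + Δ/2, 1 + Δ/2, 1]) :
    2 * ((W 1 0)^2 + (W 1 1)^2 + (W 1 2)^2 + (W 1 3)^2) =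
      (W 1 0 + W 1 1 + W 1 2 + W 1 3)^2 + (Δ + 4) * (W 1 0)^2 := by
  have hΔ0 : Δ ≠ 0 := ne_of_lt hΔ
  set S : Matrix (Fin 4) (Fin 4) ℝ :=
    !![(Δ+3)/Δ, 1/Δ, 1/Δ, 1/Δ; 1/Δ, -1/Δ, 1/Δ, 1/Δ;
       1/Δ, 1/Δ, -1/Δ, 1/Δ; 1/Δ, 1/Δ, 1/Δ, -1/Δ] with hS
  set R : Matrix (Fin 4) (Fin 4) ℝ :=
      !![1, -1, -1, -1;
         -1, 1, 1 + Δ/2, 1 + Δ/2;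
         -1, 1 + Δ/2, 1, 1 + Δ/2;
         -1, 1 + Δ/2, 1 + Δ/2, 1] with hR
  have hRS : R * S = 1 := by
    ext i j
    fin_cases i <;> fin_cases j <;>
      simp [hR, hS, Matrix.mul_apply, Fin.sum_univ_four, Matrix.one_apply, Matrix.vecHead, Matrix.vecTail] <;>
      field_simp <;> ring
  have h1 : Wᵀ * (GM * W * S) = 1 := by
    calc Wᵀ * (GM * W * S) = (Wᵀ * GM * W) * S := by
          simp only [Matrix.mul_assoc]
      _ = R * S := by rw [hW]
      _ = 1 := hRS
  have h2 : (GM * W * S) * Wᵀ = 1 := mul_eq_one_comm.mp h1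
  have h3 : GM * (W * S * Wᵀ) = 1 := by
    simpa only [Matrix.mul_assoc] using h2
  set Ginv : Matrix (Fin 4) (Fin 4) ℝ :=
    !![0, -2, 0, 0; -2, 0, 0, 0; 0, 0, 1, 0; 0, 0, 0, 1] with hGinv
  have hGG : Ginv * GM = 1 := by
    ext i j
    fin_cases i <;> fin_cases j <;>
      simp [GM, hGinv, Matrix.mul_apply, Fin.sum_univ_four, Matrix.one_apply, Matrix.vecHead, Matrix.vecTail] <;> norm_num
  have h4 : W * S * Wᵀ = Ginv := by
    calc W * S * Wᵀ = (Ginv * GM) * (W * S * Wᵀ) := by rw [hGG, Matrix.one_mul]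
      _ = Ginv * (GM * (W * S * Wᵀ)) := by simp only [Matrix.mul_assoc]
      _ = Ginv := by rw [h3, Matrix.mul_one]
  have h5 : (W * S * Wᵀ) 1 1 = 0 := by rw [h4]; simp [hGinv]
  have h6 : ((Δ+3) * (W 1 0) + W 1 1 + W 1 2 + W 1 3) * W 1 0
      + (W 1 0 - W 1 1 + W 1 2 + W 1 3) * W 1 1
      + (W 1 0 + W 1 1 - W 1 2 + W 1 3) * W 1 2
      + (W 1 0 + W 1 1 + W 1 2 - W 1 3) * W 1 3 = 0 := by
    have := h5
    simp [hS, Matrix.mul_apply, Fin.sum_univ_four,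
      Matrix.vecHead, Matrix.vecTail] at this
    have h7 := congrArg (fun t => Δ * t) this
    simp only [mul_zero] at h7
    field_simp at h7
    linarith [h7]
  nlinarith [h6]
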